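/- Let r ∈ (0,1) and suppose the optimal value over monotone solutions (p_i ≤ ⋯ ≤ p_j) of the subproblem objective is attained by the constant solution at r, with r_{i,k} ≥ r for all k in [i,j] (where r_{i,k} is the weighted H₁-proportion of the prefix block). Then for any α with 0 ≤ α < r, the minimum of the subproblem objective subject to the additional constraint p_j ≤ α is attained by the constant solution p_i = ⋯ = p_j = α, for every RBPSR. -/

import Mathlib

open MeasureTheory

/-- The RBPSR with density `ρ`: `C(H₁,q) = ∫_q^1 ρ(η)/η dη` (label `true`),
`C(H₂,q) = ∫_0^q ρ(η)/(1-η) dη` (label `false`). -/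
noncomputable def Crho (ρ : ℝ → ℝ) : Bool → ℝ → ℝ
  | true,  q => ∫ η in q..1, ρ η / η
  | false, q => ∫ η in (0:ℝ)..q, ρ η / (1 - η)

/-- The weighted proportion `r_{i,j}` of `H₁`-labels (`true`) in positions `i..j`. -/
noncomputable def pavrN (ℓ : ℕ → Bool) (v₁ v₂ : ℝ) (i j : ℕ) : ℝ :=
  (((Finset.Icc i j).filter fun k => ℓ k = true).card * v₁) /
    (((Finset.Icc i j).filter fun k => ℓ k = true).card * v₁ +
     ((Finset.Icc i j).filter fun k => ℓ k = false).card * v₂)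

/-- Block cost monotonicity: if `q2*(A+B) ≤ A` then the weighted block cost at `q2`
is at most that at `q1` for `0 ≤ q1 ≤ q2 < 1`. -/
lemma block_mono_aux (ρ : ℝ → ℝ) (hρ : ∀ η ∈ Set.Icc (0:ℝ) 1, 0 ≤ ρ η)
    (hI1 : IntervalIntegrable (fun η => ρ η / η) volume 0 1)
    (hI2 : IntervalIntegrable (fun η => ρ η / (1 - η)) volume 0 1)
    (A B : ℝ) (hA : 0 ≤ A) (hB : 0 ≤ B)
    (q1 q2 : ℝ) (h0 : 0 ≤ q1) (h12 : q1 ≤ q2) (h21 : q2 < 1)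
    (hAB : q2 * (A + B) ≤ A) :
    A * Crho ρ true q2 + B * Crho ρ false q2 ≤ A * Crho ρ true q1 + B * Crho ρ false q1 := by
  have hsub : ∀ c d : ℝ, 0 ≤ c → c ≤ d → d ≤ 1 → Set.uIcc c d ⊆ Set.uIcc (0:ℝ) 1 := by
    intro c d hc hcd hd
    apply Set.uIcc_subset_uIcc
    · rw [Set.uIcc_of_le zero_le_one]; exact ⟨hc, hcd.trans hd⟩
    · rw [Set.uIcc_of_le zero_le_one]; exact ⟨hc.trans hcd, hd⟩
  have hq21 : q2 ≤ 1 := h21.le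
  have ht12 : IntervalIntegrable (fun η => ρ η / η) volume q1 q2 :=
    hI1.mono_set (hsub q1 q2 h0 h12 hq21)
  have ht21 : IntervalIntegrable (fun η => ρ η / η) volume q2 1 :=
    hI1.mono_set (hsub q2 1 (h0.trans h12) hq21 le_rfl)
  have hf01 : IntervalIntegrable (fun η => ρ η / (1 - η)) volume 0 q1 :=
    hI2.mono_set (hsub 0 q1 le_rfl h0 (h12.trans hq21))
  have hf12 : IntervalIntegrable (fun η => ρ η / (1 - η)) volume q1 q2 :=
    hI2.mono_set (hsub q1 q2 h0 h12 hq21)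
  -- splitting identities
  have e1 : (∫ η in q1..q2, ρ η / η) + (∫ η in q2..1, ρ η / η) = ∫ η in q1..1, ρ η / η :=
    intervalIntegral.integral_add_adjacent_intervals ht12 ht21
  have e2 : (∫ η in (0:ℝ)..q1, ρ η / (1 - η)) + (∫ η in q1..q2, ρ η / (1 - η))
      = ∫ η in (0:ℝ)..q2, ρ η / (1 - η) :=
    intervalIntegral.integral_add_adjacent_intervals hf01 hf12
  -- key integral inequality
  have key : B * ∫ η in q1..q2, ρ η / (1 - η) ≤ A * ∫ η in q1..q2, ρ η / η := by
    rw [← intervalIntegral.integral_const_mul, ← intervalIntegral.integral_const_mul]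
    apply intervalIntegral.integral_mono_ae_restrict h12 (hf12.const_mul B) (ht12.const_mul A)
    have hmem := ae_restrict_mem (μ := volume) (s := Set.Icc q1 q2) measurableSet_Icc
    have hne : ∀ᵐ η ∂(volume.restrict (Set.Icc q1 q2)), η ≠ 0 := by
      refine ae_restrict_of_ae ?_
      have : (volume : Measure ℝ) {(0:ℝ)} = 0 := Real.volume_singleton
      exact (ae_iff.2 (by simpa [Set.setOf_eq_eq_singleton'] using this))
    filter_upwards [hmem, hne] with η hη hη0
    obtain ⟨hη1, hη2⟩ := hη
    have hηpos : 0 < η := lt_of_le_of_ne (h0.trans hη1) (Ne.symm hη0)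
    have hη1' : η < 1 := lt_of_le_of_lt hη2 h21
    have hρη : 0 ≤ ρ η := hρ η ⟨hηpos.le, hη1'.le⟩
    have hdiv : B / (1 - η) ≤ A / η := by
      rw [div_le_div_iff₀ (by linarith) hηpos]
      nlinarith [mul_le_mul_of_nonneg_right hη2 (by linarith : (0:ℝ) ≤ A + B)]
    calc B * (ρ η / (1 - η)) = ρ η * (B / (1 - η)) := by ring
      _ ≤ ρ η * (A / η) := mul_le_mul_of_nonneg_left hdiv hρη
      _ = A * (ρ η / η) := by ring
  simp only [Crho]
  have eA : A * ((∫ η in q1..q2, ρ η / η) + (∫ η in q2..1, ρ η / η))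
      = A * (∫ η in q1..q2, ρ η / η) + A * (∫ η in q2..1, ρ η / η) := mul_add A _ _
  have eB : B * ((∫ η in (0:ℝ)..q1, ρ η / (1 - η)) + (∫ η in q1..q2, ρ η / (1 - η)))
      = B * (∫ η in (0:ℝ)..q1, ρ η / (1 - η)) + B * (∫ η in q1..q2, ρ η / (1 - η)) :=
    mul_add B _ _
  rw [← e1, ← e2]
  linarith

/-- Splitting the weighted sum over a block into the `true` and `false` parts. -/
lemma sum_split_aux (ℓ : ℕ → Bool) (v₁ v₂ : ℝ) (ρ : ℝ → ℝ) (q : ℝ) (S : Finset ℕ) :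
    ∑ t ∈ S, (if ℓ t then v₁ else v₂) * Crho ρ (ℓ t) q
      = ((S.filter fun t => ℓ t = true).card : ℝ) * v₁ * Crho ρ true q
        + ((S.filter fun t => ℓ t = false).card : ℝ) * v₂ * Crho ρ false q := by
  rw [← Finset.sum_filter_add_sum_filter_not S (fun t => ℓ t = true)]
  congr 1
  · calc ∑ t ∈ S.filter (fun t => ℓ t = true), (if ℓ t then v₁ else v₂) * Crho ρ (ℓ t) q
        = ∑ _t ∈ S.filter (fun t => ℓ t = true), v₁ * Crho ρ true q :=
          Finset.sum_congr rfl (fun t ht => by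
            rcases Finset.mem_filter.1 ht with ⟨_, h⟩; rw [h]; simp)
      _ = _ := by rw [Finset.sum_const, nsmul_eq_mul]; ring
  · have hfe : (S.filter fun t => ¬ ℓ t = true) = S.filter fun t => ℓ t = false := by
      apply Finset.filter_congr; intro t _; simp [Bool.not_eq_true]
    rw [hfe]
    calc ∑ t ∈ S.filter (fun t => ℓ t = false), (if ℓ t then v₁ else v₂) * Crho ρ (ℓ t) q
        = ∑ _t ∈ S.filter (fun t => ℓ t = false), v₂ * Crho ρ false q :=
          Finset.sum_congr rfl (fun t ht => by
            rcases Finset.mem_filter.1 ht with ⟨_, h⟩; rw [h]; simp)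
      _ = _ := by rw [Finset.sum_const, nsmul_eq_mul]; ring

/-- Lemma 4 (augmented subproblem, upper-clamped): suppose the constant solution at
`r = r_{i,j}` is optimal for the subproblem over monotone `[0,1]`-valued solutions for
every RBPSR, and `r_{i,k} ≥ r` for every prefix block `(i,k)`.  Then for any
`0 ≤ α < r`, the subproblem augmented with the constraint `p_j ≤ α` is minimized,
for every RBPSR, by the constant solution `p_i = ⋯ = p_j = α`. -/
theorem stmt19 (ℓ : ℕ → Bool) (v₁ v₂ : ℝ) (hv₁ : 0 < v₁) (hv₂ : 0 < v₂)
    (i j : ℕ) (hij : i ≤ j)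
    (r : ℝ) (hr01 : r ∈ Set.Ioo (0:ℝ) 1)
    (hr : r = pavrN ℓ v₁ v₂ i j)
    (hprefix : ∀ k, i ≤ k → k ≤ j → r ≤ pavrN ℓ v₁ v₂ i k)
    (hopt : ∀ ρ : ℝ → ℝ,
      (∀ η ∈ Set.Icc (0:ℝ) 1, 0 ≤ ρ η) →
      (∫ η in (0:ℝ)..1, ρ η) = 1 →
      IntervalIntegrable (fun η => ρ η / η) volume 0 1 →
      IntervalIntegrable (fun η => ρ η / (1 - η)) volume 0 1 →
      ∀ p : ℕ → ℝ, MonotoneOn p (Set.Icc i j) →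
        (∀ t ∈ Set.Icc i j, p t ∈ Set.Icc (0:ℝ) 1) →
        (∑ t ∈ Finset.Icc i j, (if ℓ t then v₁ else v₂) * Crho ρ (ℓ t) r) ≤
          ∑ t ∈ Finset.Icc i j, (if ℓ t then v₁ else v₂) * Crho ρ (ℓ t) (p t)) :
    ∀ ρ : ℝ → ℝ,
      (∀ η ∈ Set.Icc (0:ℝ) 1, 0 ≤ ρ η) →
      (∫ η in (0:ℝ)..1, ρ η) = 1 →
      IntervalIntegrable (fun η => ρ η / η) volume 0 1 →
      IntervalIntegrable (fun η => ρ η / (1 - η)) volume 0 1 →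
      ∀ α, 0 ≤ α → α < r →
      ∀ p : ℕ → ℝ, MonotoneOn p (Set.Icc i j) →
        (∀ t ∈ Set.Icc i j, p t ∈ Set.Icc (0:ℝ) 1) →
        p j ≤ α →
        (∑ t ∈ Finset.Icc i j, (if ℓ t then v₁ else v₂) * Crho ρ (ℓ t) α) ≤
          ∑ t ∈ Finset.Icc i j, (if ℓ t then v₁ else v₂) * Crho ρ (ℓ t) (p t) := by
  intro ρ hρ hρint hI1 hI2 α hα0 hαr p hmono hp01 hpj
  obtain ⟨hr0, hr1⟩ := hr01
  -- Key: over any prefix block, the constant cost is nonincreasing on [0, r]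
  have key : ∀ k, i ≤ k → k ≤ j → ∀ q1 q2 : ℝ, 0 ≤ q1 → q1 ≤ q2 → q2 ≤ r →
      (∑ t ∈ Finset.Icc i k, (if ℓ t then v₁ else v₂) * Crho ρ (ℓ t) q2) ≤
      (∑ t ∈ Finset.Icc i k, (if ℓ t then v₁ else v₂) * Crho ρ (ℓ t) q1) := by
    intro k hik hkj q1 q2 hq1 h12 h2r
    rw [sum_split_aux, sum_split_aux]
    have ha : (0:ℝ) ≤ (((Finset.Icc i k).filter fun t => ℓ t = true).card : ℝ) :=
      Nat.cast_nonneg _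
    have hb : (0:ℝ) ≤ (((Finset.Icc i k).filter fun t => ℓ t = false).card : ℝ) :=
      Nat.cast_nonneg _
    have hfe : ((Finset.Icc i k).filter fun t => ¬ ℓ t = true)
        = (Finset.Icc i k).filter fun t => ℓ t = false := by
      apply Finset.filter_congr; intro t _; simp [Bool.not_eq_true]
    have hcard := Finset.card_filter_add_card_filter_not
      (s := Finset.Icc i k) (fun t => ℓ t = true)
    rw [hfe] at hcard
    have hcard1 : 1 ≤ ((Finset.Icc i k).filter fun t => ℓ t = true).card
        + ((Finset.Icc i k).filter fun t => ℓ t = false).card := by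
      rw [hcard, Nat.card_Icc]; omega
    have hden : 0 < (((Finset.Icc i k).filter fun t => ℓ t = true).card : ℝ) * v₁
        + (((Finset.Icc i k).filter fun t => ℓ t = false).card : ℝ) * v₂ := by
      have hd : 1 ≤ ((Finset.Icc i k).filter fun t => ℓ t = true).card
          ∨ 1 ≤ ((Finset.Icc i k).filter fun t => ℓ t = false).card := by omega
      rcases hd with hd | hd
      · have : (1:ℝ) ≤ (((Finset.Icc i k).filter fun t => ℓ t = true).card : ℝ) := by
          exact_mod_cast hd
        nlinarith [mul_nonneg hb hv₂.le]
      · have : (1:ℝ) ≤ (((Finset.Icc i k).filter fun t => ℓ t = false).card : ℝ) := by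
          exact_mod_cast hd
        nlinarith [mul_nonneg ha hv₁.le]
    have hpre := hprefix k hik hkj
    simp only [pavrN] at hpre
    have hrA : r * ((((Finset.Icc i k).filter fun t => ℓ t = true).card : ℝ) * v₁
        + (((Finset.Icc i k).filter fun t => ℓ t = false).card : ℝ) * v₂)
        ≤ (((Finset.Icc i k).filter fun t => ℓ t = true).card : ℝ) * v₁ :=
      (le_div_iff₀ hden).1 hpre
    have hAB : q2 * ((((Finset.Icc i k).filter fun t => ℓ t = true).card : ℝ) * v₁
        + (((Finset.Icc i k).filter fun t => ℓ t = false).card : ℝ) * v₂)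
        ≤ (((Finset.Icc i k).filter fun t => ℓ t = true).card : ℝ) * v₁ :=
      le_trans (mul_le_mul_of_nonneg_right h2r hden.le) hrA
    exact block_mono_aux ρ hρ hI1 hI2 _ _ (mul_nonneg ha hv₁.le) (mul_nonneg hb hv₂.le)
      q1 q2 hq1 h12 (lt_of_le_of_lt h2r hr1) hAB
  have hmemj : j ∈ Set.Icc i j := Set.mem_Icc.2 ⟨hij, le_rfl⟩
  -- Induction: constant at p k beats p on the prefix block
  have main : ∀ k, i ≤ k → k ≤ j →
      (∑ t ∈ Finset.Icc i k, (if ℓ t then v₁ else v₂) * Crho ρ (ℓ t) (p k)) ≤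
      ∑ t ∈ Finset.Icc i k, (if ℓ t then v₁ else v₂) * Crho ρ (ℓ t) (p t) := by
    intro k hik
    induction k, hik using Nat.le_induction with
    | base => intro _; simp
    | succ k hik ih =>
      intro hk1j
      have hkj : k ≤ j := by omega
      have hmemk : k ∈ Set.Icc i j := Set.mem_Icc.2 ⟨hik, hkj⟩
      have hmemk1 : (k+1) ∈ Set.Icc i j := Set.mem_Icc.2 ⟨by omega, hk1j⟩
      have hpk : p k ≤ p (k+1) := hmono hmemk hmemk1 (by omega)
      have hpk1r : p (k+1) ≤ r :=
        le_trans (le_trans (hmono hmemk1 hmemj hk1j) hpj) hαr.le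
      have h1 := key k hik hkj (p k) (p (k+1)) (hp01 k hmemk).1 hpk hpk1r
      have h2 := ih hkj
      rw [Finset.sum_Icc_succ_top (by omega : i ≤ k+1),
        Finset.sum_Icc_succ_top (by omega : i ≤ k+1)]
      linarith
  calc (∑ t ∈ Finset.Icc i j, (if ℓ t then v₁ else v₂) * Crho ρ (ℓ t) α)
      ≤ ∑ t ∈ Finset.Icc i j, (if ℓ t then v₁ else v₂) * Crho ρ (ℓ t) (p j) :=
        key j hij le_rfl (p j) α (hp01 j hmemj).1 hpj hαr.le
    _ ≤ _ := main j hij le_rfl
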